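/- If additionally g satisfies the translation property g(x + s𝟙) = g(x) + s for all x ∈ ℝⁿ, s ∈ ℝ, then the level-set function h⁰ from the previous statement is given explicitly by h⁰(y₁,…,y_{n-1},s) = yₙ − n ḡ(y) + n s for all y ∈ ℝⁿ and s ∈ ℝ. -/

import Mathlib

/-- The change of variables R: yᵢ = xᵢ − xₙ for i < n (0-indexed i < n), yₙ = x₁ + ⋯ + xₙ.
Here the n of the paper is n+1. -/
noncomputable def Rmap {n : ℕ} (x : Fin (n+1) → ℝ) : Fin (n+1) → ℝ :=
  fun j => if (j : ℕ) < n then x j - x (Fin.last n) else ∑ i, x i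

/-- if in addition g satisfies the translation property g(x+s𝟙) = g(x)+s, then
the level-set function h⁰ satisfies h⁰(y₁,…,y_{n-1},s) = yₙ − n ḡ(y) + n s for all y, s
(paper n = our n+1, ḡ = g ∘ R⁻¹). -/
theorem stmt14 {n : ℕ} (hn : 1 ≤ n) (g : (Fin (n+1) → ℝ) → ℝ)
    (htrans : ∀ (x : Fin (n+1) → ℝ) (s : ℝ), g (fun i => x i + s) = g x + s)
    (Rinv : (Fin (n+1) → ℝ) → (Fin (n+1) → ℝ))
    (hRinv : ∀ x, Rinv (Rmap x) = x) (hRinv' : ∀ y, Rmap (Rinv y) = y)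
    (h0 : (Fin (n+1) → ℝ) → ℝ)
    (hlevel : ∀ w : Fin (n+1) → ℝ,
      g (Rinv (Function.update w (Fin.last n) (h0 w))) = w (Fin.last n)) :
    ∀ (y : Fin (n+1) → ℝ) (s : ℝ),
      h0 (Function.update y (Fin.last n) s)
        = y (Fin.last n) - (n+1) * g (Rinv y) + (n+1) * s := by
  have hne : ((n:ℝ)+1) ≠ 0 := by positivity
  -- key affine formula
  have key : ∀ (y : Fin (n+1) → ℝ) (t : ℝ),
      g (Rinv (Function.update y (Fin.last n) t))
        = g (Rinv y) + (t - y (Fin.last n)) / ((n:ℝ)+1) := by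
    intro y t
    set x := Rinv y with hx
    set c := (t - y (Fin.last n)) / ((n:ℝ)+1) with hc
    have hsum : (∑ i, x i) = y (Fin.last n) := by
      have := congrFun (hRinv' y) (Fin.last n)
      simpa [Rmap, x] using this
    have hupd : Function.update y (Fin.last n) t = Rmap (fun i => x i + c) := by
      funext j
      by_cases hj : (j : ℕ) < n
      · have hjne : j ≠ Fin.last n := by
          intro h; rw [h] at hj; simp [Fin.last] at hj
        have hyj : y j = x j - x (Fin.last n) := by
          have := congrFun (hRinv' y) j
          simp [Rmap, hj, x] at this
          linarith [this]
        simp [Function.update, hjne, Rmap, hj, hyj]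
      · have hj' : j = Fin.last n := by
          have := j.isLt
          exact Fin.ext (by simp only [Fin.val_last]; omega)
        subst hj'
        have : (Fin.last n : ℕ) < n ↔ False := by simp [Fin.last]
        simp only [Function.update_self, Rmap, Fin.val_last, lt_irrefl, if_false]
        rw [Finset.sum_add_distrib]
        simp [hsum, hc, Finset.card_fin]
        field_simp
        ring
    rw [hupd, hRinv, htrans]
  intro y s
  set w := Function.update y (Fin.last n) s with hw
  have hww : Function.update w (Fin.last n) (h0 w) = Function.update y (Fin.last n) (h0 w) := by
    simp [hw, Function.update_idem]
  have h1 := hlevel w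
  rw [hww, key] at h1
  have h2 : w (Fin.last n) = s := by simp [hw]
  rw [h2] at h1
  field_simp at h1
  linarith
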